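/- Let α ∈ A(n) be periodic, and write α = β^i where β = ap(α) is the aperiodic prefix of α, p = |β|, and i ≥ 2. Then the string 0^{p−1}·1·β^{i−1} is an aperiodic asymmetric bracelet of length n. -/

import Mathlib

/-- Concatenation of `t` copies of `γ`. -/
def listPow (γ : List Bool) (t : ℕ) : List Bool := (List.replicate t γ).flatten

/-- A string is a necklace if it is lexicographically minimal among its rotations. -/
def IsNecklace (α : List Bool) : Prop := ∀ k : ℕ, α ≤ α.rotate k

/-- A necklace is symmetric if its reversal is one of its rotations. -/
def IsSymmetric (α : List Bool) : Prop := List.IsRotated α.reverse α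

/-- A string is an asymmetric bracelet if it is a necklace that is lexicographically
strictly smaller than every rotation of its reversal. -/
def IsAsymBracelet (α : List Bool) : Prop :=
  IsNecklace α ∧ ∀ k : ℕ, α < α.reverse.rotate k

/-- `A n`: the set of asymmetric bracelets of length `n`. -/
def A (n : ℕ) : Set (List Bool) := {α | α.length = n ∧ IsAsymBracelet α}

/-- `S n`: all length-`n` strings that are rotations of some asymmetric bracelet. -/
def S (n : ℕ) : Set (List Bool) := {β | ∃ α ∈ A n, List.IsRotated α β}

/-- A string is periodic if it is `γ^j` for some string `γ` and some `j ≥ 2`. -/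
def IsPeriodic (α : List Bool) : Prop := ∃ γ : List Bool, ∃ j : ℕ, 2 ≤ j ∧ listPow γ j = α

/-- `ap α`: the aperiodic prefix, i.e. the shortest `γ` with `α = γ^t`. -/
noncomputable def ap (α : List Bool) : List Bool :=
  α.take (sInf {p | ∃ γ : List Bool, γ.length = p ∧ ∃ t : ℕ, listPow γ t = α})

/-- Flip the first occurrence of the bit `b`. -/
def flipFirst (b : Bool) : List Bool → List Bool
  | [] => []
  | a :: rest => if a = b then (!b) :: rest else a :: flipFirst b rest

/-- Flip the first `1` to a `0`. -/
def firstone (α : List Bool) : List Bool := flipFirst true α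

/-- Flip the last `0` to a `1`. -/
def lastzero (α : List Bool) : List Bool := (flipFirst false α.reverse).reverse

/-- The lexicographically least rotation of `α`. -/
noncomputable def neckOf (α : List Bool) : List Bool :=
  ((List.range (α.length + 1)).map α.rotate).foldr min α

/-- Flip the last bit (a `1`) to `0` and take the lexicographically least rotation. -/
noncomputable def lastone (α : List Bool) : List Bool := neckOf (α.dropLast ++ [false])

/-- Flip the first bit (a `0`) to `1` and take the lexicographically least rotation. -/
noncomputable def firstzero (α : List Bool) : List Bool := neckOf (true :: α.tail)

/-- The root `0^{n-4}1011`. -/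
def rootStr (n : ℕ) : List Bool := List.replicate (n - 4) false ++ [true, false, true, true]

open Classical in
/-- The parent rule. -/
noncomputable def parentStr (n : ℕ) (α : List Bool) : List Bool :=
  if firstone α ∈ A n then firstone α
  else if lastone α ∈ A n then lastone α
  else lastzero α

/-- Cyclic window of length `n` of `o` starting at position `i` (0-indexed). -/
def cycWin (o : List Bool) (n i : ℕ) : List Bool :=
  (List.range n).map fun k => o.getD ((i + k) % o.length) false

/-- `o` is an orientable sequence of order `n`: its forward cyclic windows of length `n`
together with their reversals are `2·|o|` pairwise distinct strings. -/
def IsOS (n : ℕ) (o : List Bool) : Prop :=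
  ∀ i < o.length, ∀ j < o.length,
    (cycWin o n i = cycWin o n j → i = j) ∧ cycWin o n i ≠ (cycWin o n j).reverse

open Classical in
/-- The successor rule `g`. -/
noncomputable def succRule (α : List Bool) : Bool :=
  let n := α.length
  let i := n - α.reverse.idxOf true
  let j := α.tail.idxOf false + 2
  let β₁ := List.replicate (n - i) false ++ true :: α.tail.take (i - 1)
  let β₂ := α.tail ++ [true]
  let β₃ := α.drop (j - 1) ++ false :: List.replicate (j - 2) true
  if (β₁ ∈ A n ∧ firstone β₁ ∈ A n)
      ∨ (β₂ ∈ A n ∧ lastone β₂ ∈ A n ∧ firstone β₂ ∉ A n)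
      ∨ (β₃ ∈ A n ∧ lastzero β₃ ∈ A n ∧ firstone β₃ ∉ A n ∧ lastone β₃ ∉ A n)
  then !α.headD false else α.headD false

/-- The shift map `σ(a₁a₂⋯a_n) = a₂⋯a_n·g(a₁a₂⋯a_n)`. -/
noncomputable def sigmaMap (α : List Bool) : List Bool := α.tail ++ [succRule α]

namespace Helper
open List

lemma listPow_zero (w : List Bool) : listPow w 0 = [] := rfl

lemma listPow_succ (w : List Bool) (t : ℕ) : listPow w (t+1) = w ++ listPow w t := by
  simp [listPow, List.replicate_succ]

lemma listPow_succ' (w : List Bool) (t : ℕ) : listPow w (t+1) = listPow w t ++ w := by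
  show (List.replicate (t+1) w).flatten = _
  rw [List.replicate_succ', List.flatten_append]
  simp [listPow]

lemma length_listPow (w : List Bool) (t : ℕ) : (listPow w t).length = t * w.length := by
  induction t with
  | zero => simp [listPow_zero]
  | succ t ih => rw [listPow_succ]; simp [ih]; ring

lemma reverse_listPow (w : List Bool) (t : ℕ) : (listPow w t).reverse = listPow w.reverse t := by
  induction t with
  | zero => rfl
  | succ t ih => rw [listPow_succ, listPow_succ']; simp [ih]

lemma listPow_replicate (m : ℕ) (b : Bool) (t : ℕ) :
    listPow (List.replicate m b) t = List.replicate (t*m) b := by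
  induction t with
  | zero => simp [listPow_zero]
  | succ t ih => rw [listPow_succ, ih, show (t+1)*m = m + t*m by ring, List.replicate_add]

lemma pow_rotate_aux (x y : List Bool) (t : ℕ) :
    y ++ listPow (x ++ y) t ++ x = listPow (y ++ x) (t+1) := by
  induction t with
  | zero => simp [listPow_succ, listPow_zero]
  | succ t ih =>
    rw [listPow_succ (x ++ y) t, listPow_succ (y ++ x) (t+1), ← ih]
    simp [List.append_assoc]

lemma rotate_listPow (w : List Bool) (s t : ℕ) (hs : s ≤ w.length) :
    (listPow w t).rotate s = listPow (w.rotate s) t := by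
  cases t with
  | zero => simp [listPow_zero]
  | succ t =>
    have hs' : s ≤ (listPow w (t+1)).length := by
      rw [length_listPow]
      calc s ≤ w.length := hs
        _ ≤ (t+1)*w.length := Nat.le_mul_of_pos_left _ (Nat.succ_pos t)
    have h := pow_rotate_aux (w.take s) (w.drop s) t
    rw [take_append_drop] at h
    rw [List.rotate_eq_drop_append_take hs', List.rotate_eq_drop_append_take hs, listPow_succ,
      List.drop_append_of_le_length hs, List.take_append_of_le_length hs, List.append_assoc, ← h]
    simp [List.append_assoc]

lemma lex_append_left (u : List Bool) {x y : List Bool} (h : x < y) : u ++ x < u ++ y := by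
  induction u with
  | nil => exact h
  | cons a u ih => exact List.Lex.cons ih

lemma lt_append_of_lt : ∀ (x y : List Bool), x.length = y.length → x < y →
    ∀ (u v : List Bool), x ++ u < y ++ v := by
  intro x y hlen h
  induction h with
  | nil => simp at hlen
  | @cons a l₁ l₂ h ih =>
    intro u v
    exact List.Lex.cons (ih (by simpa using hlen) u v)
  | rel h => intro u v; exact List.Lex.rel h

lemma listPow_lt_listPow {x y : List Bool} (t : ℕ) (ht : 1 ≤ t)
    (hlen : x.length = y.length) (h : x < y) : listPow x t < listPow y t := by
  obtain ⟨t, rfl⟩ : ∃ t', t = t'+1 := ⟨t-1, by omega⟩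
  rw [listPow_succ, listPow_succ]
  exact lt_append_of_lt _ _ hlen h _ _

lemma listPow_le_listPow {x y : List Bool} (t : ℕ) (ht : 1 ≤ t)
    (hlen : x.length = y.length) (h : x ≤ y) : listPow x t ≤ listPow y t := by
  rcases lt_or_eq_of_le h with h' | rfl
  · exact le_of_lt (listPow_lt_listPow t ht hlen h')
  · exact le_refl _

lemma first_bit (b : Bool) : ∀ (y : List Bool) (j : ℕ), y.getD j (!b) = b →
    ∃ c ≤ j, ∃ rest, y = List.replicate c (!b) ++ b :: rest := by
  intro y
  induction y with
  | nil =>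
    intro j h
    rw [List.getD_nil] at h
    cases b <;> simp_all
  | cons a ys ih =>
    intro j h
    by_cases hab : a = b
    · exact ⟨0, Nat.zero_le _, ys, by simp [hab]⟩
    · have ha : a = !b := by cases a <;> cases b <;> simp_all
      cases j with
      | zero =>
        rw [List.getD_cons_zero] at h
        exact absurd h hab
      | succ j =>
        rw [List.getD_cons_succ] at h
        obtain ⟨c, hc, rest, hrest⟩ := ih j h
        exact ⟨c+1, by omega, rest, by simp [List.replicate_succ, ha, hrest]⟩

lemma repl_lt {q c : ℕ} (hc : c < q) (B rest : List Bool) :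
    List.replicate q false ++ true :: B < List.replicate c false ++ true :: rest := by
  have h : List.replicate q false ++ true :: B
      = List.replicate c false ++ (List.replicate (q - c) false ++ true :: B) := by
    rw [← List.append_assoc, ← List.replicate_add, Nat.add_sub_cancel' (le_of_lt hc)]
  rw [h]
  apply lex_append_left
  obtain ⟨d, hd⟩ : ∃ d, q - c = d + 1 := ⟨q - c - 1, by omega⟩
  rw [hd, List.replicate_succ]
  exact List.Lex.rel (by decide)

lemma lt_length_of_getD_true {l : List Bool} {j : ℕ} (h : l.getD j false = true) :
    j < l.length := by
  by_contra hc
  rw [List.getD_eq_default _ _ (by omega)] at h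
  exact Bool.false_ne_true h

lemma lt_of_early_true {q : ℕ} (B y : List Bool) (h : ∃ j < q, y.getD j false = true) :
    List.replicate q false ++ true :: B < y := by
  obtain ⟨j, hj, hy⟩ := h
  obtain ⟨c, hc, rest, rfl⟩ := first_bit true y j (by simpa using hy)
  exact repl_lt (by omega) B rest

lemma getD_drop' (l : List Bool) (s j : ℕ) (h : j < (l.drop s).length) :
    (l.drop s).getD j false = l.getD (s+j) false := by
  rw [List.getD_eq_getElem _ _ h, List.getD_eq_getElem _ false (by simp at h ⊢; omega),
    List.getElem_drop]

lemma eq_replicate_of_getD {l : List Bool} {b : Bool}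
    (h : ∀ j, j < l.length → l.getD j false = b) : l = List.replicate l.length b := by
  apply List.ext_getElem (by simp)
  intro n h1 h2
  rw [List.getElem_replicate, ← List.getD_eq_getElem l false h1]
  exact h n h1

lemma workhorse (w ext : List Bool)
    (Hrot : ∀ s, s < w.length → ∃ j < w.length - 1, (w.drop s ++ w).getD j false = true)
    (Hlast : ∀ s, 1 ≤ s → s < w.length → ∃ j < w.length - 1, (w.drop s ++ ext).getD j false = true) :
    ∀ t m, m < w.length * t →
      ∃ j < w.length - 1, ((listPow w t).drop m ++ ext).getD j false = true := by
  intro t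
  induction t with
  | zero => intro m hm; omega
  | succ t ih =>
    intro m hm
    by_cases hmp : w.length ≤ m
    · rw [listPow_succ, show m = w.length + (m - w.length) by omega, List.drop_length_add_append]
      have hmul : w.length * (t+1) = w.length * t + w.length := by ring
      exact ih (m - w.length) (by omega)
    · push_neg at hmp
      rw [listPow_succ, List.drop_append_of_le_length (le_of_lt hmp)]
      cases t with
      | zero =>
        rw [listPow_zero, List.append_nil]
        rcases Nat.eq_zero_or_pos m with rfl | hm1
        · obtain ⟨j, hj, hjv⟩ := Hrot 0 (by omega)
          rw [List.drop_zero] at hjv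
          refine ⟨j, hj, ?_⟩
          rw [List.drop_zero, List.getD_append _ _ _ _ (by omega)]
          rw [List.getD_append _ _ _ _ (by omega)] at hjv
          exact hjv
        · exact Hlast m hm1 hmp
      | succ t =>
        obtain ⟨j, hj, hjv⟩ := Hrot m hmp
        have hjlen : j < (w.drop m ++ w).length := lt_length_of_getD_true hjv
        refine ⟨j, hj, ?_⟩
        rw [listPow_succ, show w.drop m ++ (w ++ listPow w t) ++ ext
            = (w.drop m ++ w) ++ (listPow w t ++ ext) by simp [List.append_assoc]]
        rw [List.getD_append _ _ _ _ hjlen]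
        exact hjv

end Helper

open Helper List

/-- Let `α ∈ A n` be periodic, `α = β^i` with `β = ap α` aperiodic,
`p = |β|`, and `i ≥ 2`.  Then `0^{p-1}·1·β^{i-1}` is an aperiodic asymmetric bracelet of
length `n`. -/
theorem periodic_maps_to_aperiodic (n : ℕ) (α β : List Bool) (i : ℕ)
    (hα : α ∈ A n) (hi : 2 ≤ i) (hβ : ¬ IsPeriodic β) (heq : α = listPow β i) :
    (List.replicate (β.length - 1) false ++ [true] ++ listPow β (i - 1)) ∈ A n ∧
      ¬ IsPeriodic (List.replicate (β.length - 1) false ++ [true] ++ listPow β (i - 1)) := by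
  obtain ⟨hlen, hneck, hasym⟩ := hα
  obtain ⟨i', rfl⟩ : ∃ i', i = i' + 2 := ⟨i - 2, by omega⟩
  have hi1 : i' + 2 - 1 = i' + 1 := rfl
  set p := β.length with hp
  -- basic exclusions
  have K : ∀ k, α.reverse.rotate k ≠ α := by
    intro k h
    have := hasym k
    rw [h] at this
    exact lt_irrefl _ this
  have hnotrep : ∀ (m : ℕ) (b : Bool), β = List.replicate m b → False := by
    intro m b hb
    apply K 0
    rw [List.rotate_zero, heq, hb, listPow_replicate, List.reverse_replicate,
      ← listPow_replicate, ← hb, ← heq]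
  have hp2 : 2 ≤ p := by
    by_contra h
    push_neg at h
    interval_cases hpv : p
    · exact hnotrep 0 true (List.length_eq_zero_iff.mp hpv)
    · obtain ⟨b, hb⟩ := List.length_eq_one_iff.mp hpv
      exact hnotrep 1 b (by simpa using hb)
  have hn : n = (i'+2) * p := by
    rw [← hlen, heq, length_listPow]
  -- β is a necklace
  have hβneck : ∀ s, s ≤ p → β ≤ β.rotate s := by
    intro s hs
    by_contra h
    have h' : β.rotate s < β := lt_of_not_ge h
    have h1 := hneck s
    rw [heq, rotate_listPow β s _ hs] at h1
    exact absurd (lt_of_le_of_lt h1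
      (listPow_lt_listPow (i'+2) (by omega) (by simp) h')) (lt_irrefl _)
  -- β < rotation of reverse by 1
  have hβlt : β < β.reverse.rotate 1 := by
    by_contra h
    have h' : β.reverse.rotate 1 ≤ β := le_of_not_gt h
    have h1 := hasym 1
    rw [heq, reverse_listPow, rotate_listPow β.reverse 1 _ (by simp only [List.length_drop, List.length_reverse, List.length_append, List.length_replicate, List.length_cons]; omega)] at h1
    exact absurd (lt_of_lt_of_le h1
      (listPow_le_listPow (i'+2) (by omega) (by simp) h')) (lt_irrefl _)
  -- β is not 0^(p-1)1
  have hnotlast0 : β ≠ List.replicate (p-1) false ++ [true] := by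
    intro hb
    have hcomp : (List.replicate (p-1) false ++ [true]).reverse.rotate 1
        = List.replicate (p-1) false ++ [true] := by
      rw [List.reverse_append, List.reverse_replicate]
      show ([true] ++ _).rotate 1 = _
      rw [List.rotate_eq_drop_append_take (by simp)]
      simp
    rw [hb, hcomp] at hβlt
    exact lt_irrefl _ hβlt
  -- head of β is false
  have hhead : β.getD 0 false = false := by
    by_contra h0
    have h0' : β.getD 0 false = true := by simpa using h0
    have hexf : ∃ j, j < p ∧ β.getD j false = false := by
      by_contra hno
      push_neg at hno
      apply hnotrep p true
      have : ∀ j, j < β.length → β.getD j false = true := by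
        intro j hj
        rcases Bool.eq_false_or_eq_true (β.getD j false) with h | h
        · exact h
        · exact absurd h (hno j (by omega))
      have h2 := eq_replicate_of_getD this
      rwa [← hp] at h2
    obtain ⟨j, hj, hjf⟩ := hexf
    have hjf' : β.getD j true = false := by
      rw [List.getD_eq_getElem _ _ (by omega), ← List.getD_eq_getElem β false (by omega)]
      exact hjf
    obtain ⟨c, hc, rest, hbeq⟩ := first_bit false β j (by simpa using hjf')
    rw [Bool.not_false] at hbeq
    have hc1 : 1 ≤ c := by
      rcases Nat.eq_zero_or_pos c with rfl | h
      · rw [hbeq] at h0'; simp at h0'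
      · exact h
    have hcp : c < p := by
      have : β.length = c + 1 + rest.length := by
        rw [hbeq]
        simp only [List.length_append, List.length_replicate, List.length_cons]
        omega
      omega
    have hrot : β.rotate c = false :: (rest ++ List.replicate c true) := by
      rw [List.rotate_eq_drop_append_take (by omega), hbeq,
        List.drop_left' (by simp), List.take_left' (by simp)]
      simp
    have hlt : β.rotate c < β := by
      obtain ⟨c', rfl⟩ : ∃ c', c = c' + 1 := ⟨c - 1, by omega⟩
      rw [hrot, hbeq, List.replicate_succ, List.cons_append]
      exact List.Lex.rel (by decide)
    exact absurd (lt_of_le_of_lt (hβneck c (by omega)) hlt) (lt_irrefl _)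
  -- decomposition of β
  have hdec : ∃ a v, β = List.replicate a false ++ true :: v ∧ 1 ≤ a ∧ a ≤ p - 2 := by
    have hext : ∃ j, j < p ∧ β.getD j false = true := by
      by_contra hno
      push_neg at hno
      apply hnotrep p false
      have : ∀ j, j < β.length → β.getD j false = false := by
        intro j hj
        rcases Bool.eq_false_or_eq_true (β.getD j false) with h | h
        · exact absurd h (hno j (by omega))
        · exact h
      have h2 := eq_replicate_of_getD this
      rwa [← hp] at h2
    obtain ⟨j, hj, hjt⟩ := hext
    obtain ⟨a, haj, v, hbeq⟩ := first_bit true β j (by simpa using hjt)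
    refine ⟨a, v, by simpa using hbeq, ?_, ?_⟩
    · rcases Nat.eq_zero_or_pos a with rfl | h
      · rw [hbeq] at hhead; simp at hhead
      · exact h
    · have hlv : β.length = a + 1 + v.length := by
        rw [hbeq]
        simp only [List.length_append, List.length_replicate, List.length_cons]
        omega
      by_contra hcon
      push_neg at hcon
      have ha : a = p - 1 ∧ v.length = 0 := by omega
      have hv : v = [] := List.length_eq_zero_iff.mp ha.2
      apply hnotlast0
      rw [hbeq, hv, ha.1]
      simp
  obtain ⟨a, v, hbeq, ha1, ha2⟩ := hdec
  have hβa : β.getD a false = true := by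
    rw [hbeq, List.getD_append_right _ _ _ _ (by simp)]
    simp
  -- last bit of β is true
  have hlast : β.getD (p-1) false = true := by
    by_contra h
    have h' : β.getD (p-1) false = false := by simpa using h
    have hdrop : β.drop (p-1) = [false] := by
      apply List.ext_getElem (by simp [← hp]; omega)
      intro m h1 h2
      have hm : m = 0 := by simp at h2; omega
      subst hm
      rw [List.getElem_drop]
      simp only [List.getElem_cons_zero]
      rw [← List.getD_eq_getElem β false (by omega)]
      simpa using h'
    have htake : β.take (p-1) = List.replicate a false ++ true :: v.take (p-2-a) := by
      rw [hbeq, show p-1 = (List.replicate a false).length + (p-1-a) by simp; omega,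
        List.take_length_add_append, show p-1-a = (p-2-a)+1 by omega, List.take_succ_cons]
    have hrot : β.rotate (p-1) = List.replicate a false ++ false :: (true :: v.take (p-2-a)) := by
      rw [List.rotate_eq_drop_append_take (by omega), hdrop, htake,
        show ([false] : List Bool) ++ (List.replicate a false ++ true :: v.take (p-2-a))
          = List.replicate (a+1) false ++ true :: v.take (p-2-a) by
            rw [List.replicate_succ]; simp,
        List.replicate_succ', List.append_assoc]
      simp
    have hlt : β.rotate (p-1) < β := by
      rw [hrot, hbeq]
      exact lex_append_left _ (List.Lex.rel (by decide))
    exact absurd (lt_of_le_of_lt (hβneck (p-1) (by omega)) hlt) (lt_irrefl _)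
  -- window hypotheses for workhorse (forward direction)
  have Hrot : ∀ s, s < β.length → ∃ j < β.length - 1, (β.drop s ++ β).getD j false = true := by
    intro s hs
    rw [← hp] at hs ⊢
    by_cases hsa : s ≤ a
    · refine ⟨a - s, by omega, ?_⟩
      rw [List.getD_append _ _ _ _ (by simp [← hp]; omega),
        getD_drop' _ _ _ (by simp [← hp]; omega), show s + (a-s) = a by omega]
      exact hβa
    · refine ⟨p - 1 - s, by omega, ?_⟩
      rw [List.getD_append _ _ _ _ (by simp [← hp]; omega),
        getD_drop' _ _ _ (by simp [← hp]; omega), show s + (p-1-s) = p-1 by omega]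
      exact hlast
  have Hlast : ∀ (ext : List Bool) s, 1 ≤ s → s < β.length →
      ∃ j < β.length - 1, (β.drop s ++ ext).getD j false = true := by
    intro ext s hs1 hs
    rw [← hp] at hs ⊢
    refine ⟨p - 1 - s, by omega, ?_⟩
    rw [List.getD_append _ _ _ _ (by simp [← hp]; omega),
      getD_drop' _ _ _ (by simp [← hp]; omega), show s + (p-1-s) = p-1 by omega]
    exact hlast
  -- reverse-side facts
  have hβrl : β.reverse.length = p := by simp [hp]
  have hβr0 : β.reverse.getD 0 false = true := by
    rw [List.getD_eq_getElem _ _ (by omega), List.getElem_reverse,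
      ← List.getD_eq_getElem β false (by simp [← hp]; omega)]
    simpa [← hp] using hlast
  have hβrin : β.reverse.getD (p-1-a) false = true := by
    rw [List.getD_eq_getElem _ _ (by omega), List.getElem_reverse,
      ← List.getD_eq_getElem β false (by simp [← hp]; omega)]
    rw [show β.length - 1 - (p-1-a) = a by simp [← hp]; omega]
    exact hβa
  have Hrot_r : ∀ s, s < β.reverse.length →
      ∃ j < β.reverse.length - 1, (β.reverse.drop s ++ β.reverse).getD j false = true := by
    intro s hs
    rw [hβrl] at hs ⊢
    rcases Nat.eq_zero_or_pos s with rfl | hs1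
    · refine ⟨0, by omega, ?_⟩
      rw [List.drop_zero, List.getD_append _ _ _ _ (by omega)]
      exact hβr0
    rcases eq_or_lt_of_le (show 1 ≤ s from hs1) with h1 | hs2
    · refine ⟨p - 2 - a, by omega, ?_⟩
      rw [← h1, List.getD_append _ _ _ _ (by simp only [List.length_drop, List.length_reverse, List.length_append, List.length_replicate, List.length_cons]; omega),
        getD_drop' _ _ _ (by simp only [List.length_drop, List.length_reverse, List.length_append, List.length_replicate, List.length_cons]; omega), show 1 + (p-2-a) = p-1-a by omega]
      exact hβrin
    · refine ⟨p - s, by omega, ?_⟩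
      rw [List.getD_append_right _ _ _ _ (by simp only [List.length_drop, List.length_reverse, List.length_append, List.length_replicate, List.length_cons]; omega),
        show p - s - (β.reverse.drop s).length = 0 by simp only [List.length_drop, List.length_reverse]; omega]
      exact hβr0
  have Hlast_r : ∀ (z : List Bool) s, 1 ≤ s → s < β.reverse.length →
      ∃ j < β.reverse.length - 1, (β.reverse.drop s ++ (true :: z)).getD j false = true := by
    intro z s hs1 hs
    rw [hβrl] at hs ⊢
    rcases eq_or_lt_of_le hs1 with h1 | hs2
    · refine ⟨p - 2 - a, by omega, ?_⟩
      rw [← h1, List.getD_append _ _ _ _ (by simp only [List.length_drop, List.length_reverse, List.length_append, List.length_replicate, List.length_cons]; omega),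
        getD_drop' _ _ _ (by simp only [List.length_drop, List.length_reverse, List.length_append, List.length_replicate, List.length_cons]; omega), show 1 + (p-2-a) = p-1-a by omega]
      exact hβrin
    · refine ⟨p - s, by omega, ?_⟩
      rw [List.getD_append_right _ _ _ _ (by simp only [List.length_drop, List.length_reverse, List.length_append, List.length_replicate, List.length_cons]; omega),
        show p - s - (β.reverse.drop s).length = 0 by simp only [List.length_drop, List.length_reverse]; omega]
      simp
  -- arithmetic bookkeeping
  have hP : p + (i'+1)*p = n := by rw [hn]; ring
  have hmul : β.length * (i'+1) = (i'+1)*p := by rw [← hp]; ring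
  have hmul2 : β.reverse.length * (i'+1) = (i'+1)*p := by rw [List.length_reverse, ← hp]; ring
  have hγlen : (List.replicate (p-1) false ++ true :: listPow β (i'+1)).length = n := by
    simp only [List.length_append, List.length_replicate, List.length_cons, length_listPow, ← hp]
    omega
  -- strict minimality among nontrivial rotations
  have hstrict : ∀ k, 1 ≤ k → k ≤ n - 1 →
      List.replicate (p-1) false ++ true :: listPow β (i'+1)
        < (List.replicate (p-1) false ++ true :: listPow β (i'+1)).rotate k := by
    intro k hk1 hk2
    rw [List.rotate_eq_drop_append_take (by rw [hγlen]; omega)]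
    by_cases hkp : k ≤ p - 1
    · rw [List.drop_append_of_le_length (by simp only [List.length_replicate]; omega),
        List.drop_replicate, List.append_assoc, List.cons_append]
      exact repl_lt (by omega) _ _
    · push_neg at hkp
      have hd : (List.replicate (p-1) false ++ true :: listPow β (i'+1)).drop k
          = (listPow β (i'+1)).drop (k - p) := by
        conv_lhs =>
          rw [show List.replicate (p-1) false ++ true :: listPow β (i'+1)
              = (List.replicate (p-1) false ++ [true]) ++ listPow β (i'+1) by simp,
            show k = (List.replicate (p-1) false ++ [true]).length + (k - p) by
              simp only [List.length_append, List.length_replicate, List.length_cons,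
                List.length_nil]; omega]
        rw [List.drop_length_add_append]
      rw [hd]
      apply lt_of_early_true
      have h := workhorse β
        ((List.replicate (p-1) false ++ true :: listPow β (i'+1)).take k)
        Hrot (Hlast _) (i'+1) (k-p) (by omega)
      rw [← hp] at h
      exact h
  -- γ is a necklace
  have hγneck : ∀ k, List.replicate (p-1) false ++ true :: listPow β (i'+1)
      ≤ (List.replicate (p-1) false ++ true :: listPow β (i'+1)).rotate k := by
    intro k
    rw [← List.rotate_mod, hγlen]
    rcases Nat.eq_zero_or_pos (k % n) with h0 | hpos
    · rw [h0, List.rotate_zero]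
    · exact le_of_lt (hstrict (k % n) hpos
        (by have := Nat.mod_lt k (show 0 < n by omega); omega))
  -- reverse of γ
  have hγrev : (List.replicate (p-1) false ++ true :: listPow β (i'+1)).reverse
      = listPow β.reverse (i'+1) ++ (true :: List.replicate (p-1) false) := by
    rw [List.reverse_append, List.reverse_replicate, List.reverse_cons, reverse_listPow,
      List.append_assoc]
    simp
  have hγrevlen : (List.replicate (p-1) false ++ true :: listPow β (i'+1)).reverse.length = n := by
    rw [List.length_reverse, hγlen]
  -- γ is strictly below every rotation of its reverse
  have hγasym : ∀ k, List.replicate (p-1) false ++ true :: listPow β (i'+1)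
      < (List.replicate (p-1) false ++ true :: listPow β (i'+1)).reverse.rotate k := by
    intro k
    rw [← List.rotate_mod, hγrevlen]
    obtain ⟨k', hk'eq, hk'lt⟩ : ∃ k', k % n = k' ∧ k' < n :=
      ⟨k % n, rfl, Nat.mod_lt _ (by omega)⟩
    rw [hk'eq, hγrev, List.rotate_eq_drop_append_take (by
      simp only [List.length_append, List.length_cons, List.length_replicate, length_listPow,
        List.length_reverse, ← hp]
      omega)]
    by_cases hA : k' < (i'+1)*p
    · rw [List.drop_append_of_le_length (by rw [length_listPow, List.length_reverse, ← hp]; omega),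
        List.append_assoc, List.cons_append]
      apply lt_of_early_true
      have h := workhorse β.reverse
        (true :: (List.replicate (p-1) false ++
          (listPow β.reverse (i'+1) ++ true :: List.replicate (p-1) false).take k'))
        Hrot_r (Hlast_r _) (i'+1) k' (by omega)
      rw [hβrl] at h
      exact h
    · push_neg at hA
      have hLl : (listPow β.reverse (i'+1)).length = (i'+1)*p := by
        rw [length_listPow, List.length_reverse, ← hp]
      rcases show k' = (i'+1)*p ∨ k' = (i'+1)*p + 1 ∨ (i'+1)*p + 1 < k' by omega
        with hc | hc | hc
      · -- start at the isolated 1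
        rw [hc, List.drop_left' hLl]
        apply lt_of_early_true
        exact ⟨0, by omega, by rw [List.cons_append, List.getD_cons_zero]⟩
      · -- the special rotation
        have hd : (listPow β.reverse (i'+1) ++ (true :: List.replicate (p-1) false)).drop k'
            = List.replicate (p-1) false := by
          rw [hc, show (i'+1)*p + 1 = (listPow β.reverse (i'+1)).length + 1 by rw [hLl],
            List.drop_append]
          simp
        have ht : (listPow β.reverse (i'+1) ++ (true :: List.replicate (p-1) false)).take k'
            = listPow β.reverse (i'+1) ++ [true] := by
          rw [hc, show (i'+1)*p + 1 = (listPow β.reverse (i'+1)).length + 1 by rw [hLl],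
            List.take_append]
          simp
        rw [hd, ht]
        apply lex_append_left
        obtain ⟨τ, hβrc⟩ : ∃ τ, β.reverse = true :: τ := by
          rcases hh : β.reverse with _ | ⟨b, τ⟩
          · exact absurd hh (List.ne_nil_of_length_pos (by rw [hβrl]; omega))
          · have h := hβr0
            rw [hh] at h
            simp only [List.getD_cons_zero] at h
            exact ⟨τ, by rw [h]⟩
        obtain ⟨z, hz⟩ : ∃ z, listPow β.reverse i' ++ [true] = true :: z := by
          cases i' with
          | zero => exact ⟨[], by simp [listPow_zero]⟩
          | succ m =>
            refine ⟨τ ++ (listPow β.reverse m ++ [true]), ?_⟩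
            rw [listPow_succ, hβrc]
            simp [List.append_assoc]
        have hLtrue : listPow β.reverse (i'+1) ++ [true] = true :: ((τ ++ [true]) ++ z) := by
          rw [listPow_succ, List.append_assoc, hz, hβrc, List.cons_append, List.append_cons]
        rw [hLtrue]
        apply List.Lex.cons
        rw [show listPow β (i'+1) = β ++ listPow β i' from listPow_succ β i']
        refine lt_append_of_lt β (τ ++ [true]) ?_ ?_ _ _
        · have hh := hβrl
          rw [hβrc] at hh
          simp only [List.length_cons] at hh
          simp only [List.length_append, List.length_cons, List.length_nil, ← hp]
          omega
        · have hrot1 : β.reverse.rotate 1 = τ ++ [true] := by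
            rw [hβrc, List.rotate_eq_drop_append_take (by simp)]
            simp
          rw [← hrot1]
          exact hβlt
      · -- start inside the zero block
        obtain ⟨e, he1, he2, hk'e⟩ : ∃ e, 1 ≤ e ∧ e ≤ p - 2 ∧ k' = (i'+1)*p + (1 + e) :=
          ⟨k' - (i'+1)*p - 1, by omega, by omega, by omega⟩
        have hd : (listPow β.reverse (i'+1) ++ (true :: List.replicate (p-1) false)).drop k'
            = List.replicate (p-1-e) false := by
          rw [hk'e, show (i'+1)*p + (1+e) = (listPow β.reverse (i'+1)).length + (1+e) by rw [hLl],
            List.drop_length_add_append, show 1+e = e+1 by omega, List.drop_succ_cons, List.drop_replicate]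
        have ht : (listPow β.reverse (i'+1) ++ (true :: List.replicate (p-1) false)).take k'
            = listPow β.reverse (i'+1) ++ (true :: List.replicate e false) := by
          rw [hk'e, show (i'+1)*p + (1+e) = (listPow β.reverse (i'+1)).length + (1+e) by rw [hLl],
            List.take_length_add_append, show 1+e = e+1 by omega, List.take_succ_cons, List.take_replicate]
          rw [show e ⊓ (p-1) = e from min_eq_left (by omega)]
        rw [hd, ht]
        apply lt_of_early_true
        refine ⟨p-1-e, by omega, ?_⟩
        rw [List.getD_append_right _ _ _ _ (by simp only [List.length_replicate]; omega),
          show p-1-e - (List.replicate (p-1-e) false).length = 0 by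
            simp only [List.length_replicate]; omega,
          show listPow β.reverse (i'+1) = β.reverse ++ listPow β.reverse i'
            from listPow_succ β.reverse i',
          List.append_assoc,
          List.getD_append _ _ _ _ (by rw [List.length_reverse, ← hp]; omega)]
        exact hβr0
  -- rewrite the goal string
  have hgoalγ : List.replicate (β.length - 1) false ++ [true] ++ listPow β (i' + 2 - 1)
      = List.replicate (p-1) false ++ true :: listPow β (i'+1) := by
    rw [show i' + 2 - 1 = i' + 1 by omega, ← hp, List.append_assoc]
    simp
  rw [hgoalγ]
  refine ⟨⟨hγlen, hγneck, hγasym⟩, ?_⟩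
  -- aperiodicity
  rintro ⟨δ, j, hj2, hpow⟩
  have hδl : n = j * δ.length := by rw [← hγlen, ← hpow, length_listPow]
  have hδpos : 0 < δ.length := by
    rcases Nat.eq_zero_or_pos δ.length with h0 | h
    · rw [h0, Nat.mul_zero] at hδl; omega
    · exact h
  have hδlt : δ.length ≤ n - 1 := by
    have h22 : 2 * δ.length ≤ j * δ.length := Nat.mul_le_mul_right _ hj2
    omega
  have hfix : (List.replicate (p-1) false ++ true :: listPow β (i'+1)).rotate δ.length
      = List.replicate (p-1) false ++ true :: listPow β (i'+1) := by
    rw [← hpow, rotate_listPow δ _ _ (le_refl _), List.rotate_length]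
  have hcontr := hstrict δ.length hδpos hδlt
  rw [hfix] at hcontr
  exact lt_irrefl _ hcontr
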